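/- Let X ∈ ℝ^{n_x×n_x} be symmetric positive definite, Y ∈ ℝ^{n_u×n_x}, and for i = 1,…,s let E_{W,i} ∈ ℝ^{n_pi×n_pi} be symmetric positive definite and E^x_{Y,i} ∈ ℝ^{n_qi×n_x}, E^u_{Y,i} ∈ ℝ^{n_qi×n_u} be given. Suppose a_α ≥ 0 and a_{σ,1},…,a_{σ,s} ≥ 0 satisfy: (a) [[−X, A X − B^u Y, B^w],[(A X − B^u Y)ᵀ, −a_α X, 0],[(B^w)ᵀ, 0, −D]] ⪯ 0 with D = diag(a_{σ,1} E_{W,1},…,a_{σ,s} E_{W,s}); (b) for each i, [[−I_{n_qi}, E^x_{Y,i} X − E^u_{Y,i} Y],[(E^x_{Y,i} X − E^u_{Y,i} Y)ᵀ, −X]] ⪯ 0; and (c) a_α + Σ_{i=1}^s a_{σ,i} ≤ 1. Then, with E_R = X^{-1}, K = Y X^{-1}, Ā = A − B^u K, and C̄_i = E^x_{Y,i} − E^u_{Y,i} K, for every σ ≥ 0 the set R(σ) = {x : xᵀ E_R x ≤ σ²} satisfies (i) R(σ) ⊆ Y(σ) = {x : xᵀ C̄_iᵀ C̄_i x ≤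 σ² for all i} and (ii) Ā·R(σ) + B^w·W(σ) ⊆ R(σ), where W(σ) = {w = (w_1,…,w_s) : w_iᵀ E_{W,i} w_i ≤ σ² for all i}. -/

import Mathlib

open Matrix Set Pointwise Filter Topology

noncomputable def vnorm {n : Type*} [Fintype n] (v : n → ℝ) : ℝ :=
  Real.sqrt (∑ i, v i ^ 2)

noncomputable def sNorm {m n : Type*} [Fintype m] [Fintype n] (M : Matrix m n ℝ) : ℝ :=
  sSup ((fun v => vnorm (M.mulVec v)) '' {v | vnorm v ≤ 1})

/-- `specLe1 M` means the spectral (operator 2-)norm of `M` is at most 1. -/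
def specLe1 {m n : Type*} [Fintype m] [Fintype n] (M : Matrix m n ℝ) : Prop :=
  ∀ v, vnorm (M.mulVec v) ≤ vnorm v

/-- Membership in the structured norm-bounded uncertainty set 𝔻:
`Δ = diag(Δ₁,…,Δ_s)` with `‖Δᵢ‖₂ ≤ 1`. -/
def memD {s : ℕ} {np nq : Fin s → ℕ}
    (Δ : Matrix (Σ i, Fin (np i)) (Σ i, Fin (nq i)) ℝ) : Prop :=
  ∃ B : ∀ i, Matrix (Fin (np i)) (Fin (nq i)) ℝ,
    (∀ i, specLe1 (B i)) ∧ Δ = Matrix.blockDiagonal' B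

/-- The `i`-th row block of a block-partitioned matrix. -/
def rowBlock {s : ℕ} {nq : Fin s → ℕ} {n : Type*}
    (M : Matrix (Σ i, Fin (nq i)) n ℝ) (i : Fin s) : Matrix (Fin (nq i)) n ℝ :=
  Matrix.of fun j l => M ⟨i, j⟩ l

/-- The `i`-th block of a block-partitioned vector. -/
def vecBlock {s : ℕ} {np : Fin s → ℕ} (v : (Σ i, Fin (np i)) → ℝ) (i : Fin s) :
    Fin (np i) → ℝ := fun j => v ⟨i, j⟩

lemma blockDiagonal'_dot {s : ℕ} {np : Fin s → ℕ}
    (B : ∀ i, Matrix (Fin (np i)) (Fin (np i)) ℝ) (w : (Σ i, Fin (np i)) → ℝ) :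
    w ⬝ᵥ (Matrix.blockDiagonal' B).mulVec w
      = ∑ i, vecBlock w i ⬝ᵥ (B i).mulVec (vecBlock w i) := by
  simp only [dotProduct, Matrix.mulVec, vecBlock]
  rw [← Finset.univ_sigma_univ, Finset.sum_sigma]
  refine Finset.sum_congr rfl fun i _ => ?_
  refine Finset.sum_congr rfl fun j _ => ?_
  congr 1
  show (∑ p : Σ i, Fin (np i), Matrix.blockDiagonal' B ⟨i, j⟩ p * w p) = _
  rw [← Finset.univ_sigma_univ, Finset.sum_sigma]
  rw [Finset.sum_eq_single i]
  · simp
  · intro i' _ h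
    apply Finset.sum_eq_zero
    intro j' _
    rw [Matrix.blockDiagonal'_apply_ne _ _ _ (Ne.symm h), zero_mul]
  · intro h; exact absurd (Finset.mem_univ i) h

/-- the approximate minimal-RPI LMI conditions (a)–(c) in the variables
`(X, Y)` imply the RPI level-set properties with `E_R = X⁻¹`, `K = Y X⁻¹`. -/
theorem stmt8 {nx nu s : ℕ} {np nq : Fin s → ℕ}
    (A : Matrix (Fin nx) (Fin nx) ℝ) (Bu : Matrix (Fin nx) (Fin nu) ℝ)
    (Bw : Matrix (Fin nx) (Σ i, Fin (np i)) ℝ)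
    (X : Matrix (Fin nx) (Fin nx) ℝ) (hX : X.PosDef)
    (Y : Matrix (Fin nu) (Fin nx) ℝ)
    (E_W : ∀ i, Matrix (Fin (np i)) (Fin (np i)) ℝ) (hEW : ∀ i, (E_W i).PosDef)
    (EYx : ∀ i : Fin s, Matrix (Fin (nq i)) (Fin nx) ℝ)
    (EYu : ∀ i : Fin s, Matrix (Fin (nq i)) (Fin nu) ℝ)
    (aα : ℝ) (aσ : Fin s → ℝ) (haα : 0 ≤ aα) (haσ : ∀ i, 0 ≤ aσ i)
    (ha : (-(Matrix.fromBlocks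
        (Matrix.fromBlocks (-X) (A * X - Bu * Y) ((A * X - Bu * Y)ᵀ) (-(aα • X)))
        (Matrix.fromRows Bw 0)
        (Matrix.fromCols Bwᵀ 0)
        (-(Matrix.blockDiagonal' fun i => aσ i • E_W i)))).PosSemidef)
    (hb : ∀ i, (-(Matrix.fromBlocks
        (-(1 : Matrix (Fin (nq i)) (Fin (nq i)) ℝ)) (EYx i * X - EYu i * Y)
        ((EYx i * X - EYu i * Y)ᵀ) (-X))).PosSemidef)
    (hc : aα + ∑ i, aσ i ≤ 1) :
    ∀ σ : ℝ, 0 ≤ σ →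
      ({x | x ⬝ᵥ X⁻¹.mulVec x ≤ σ ^ 2} ⊆
          {x | ∀ i, x ⬝ᵥ ((EYx i - EYu i * (Y * X⁻¹))ᵀ *
              (EYx i - EYu i * (Y * X⁻¹))).mulVec x ≤ σ ^ 2}) ∧
      ((A - Bu * (Y * X⁻¹)).mulVec '' {x | x ⬝ᵥ X⁻¹.mulVec x ≤ σ ^ 2} +
          Bw.mulVec ''
            {w | ∀ i, vecBlock w i ⬝ᵥ (E_W i).mulVec (vecBlock w i) ≤ σ ^ 2} ⊆
        {x | x ⬝ᵥ X⁻¹.mulVec x ≤ σ ^ 2}) := by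
  have hdet : IsUnit X.det := isUnit_iff_ne_zero.mpr hX.det_pos.ne'
  have hXinv : X * X⁻¹ = 1 := Matrix.mul_nonsing_inv X hdet
  have hinvX : X⁻¹ * X = 1 := Matrix.nonsing_inv_mul X hdet
  have hXsymm : Xᵀ = X := hX.isHermitian.eq
  have hPsymm : X⁻¹ᵀ = X⁻¹ := by rw [Matrix.transpose_nonsing_inv, hXsymm]
  have hsym : ∀ v w : Fin nx → ℝ, v ⬝ᵥ X⁻¹.mulVec w = (X⁻¹.mulVec v) ⬝ᵥ w := by
    intro v w
    rw [Matrix.dotProduct_mulVec, ← hPsymm, Matrix.vecMul_transpose, hPsymm]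
  intro σ hσ
  have hσ2 : (0:ℝ) ≤ σ ^ 2 := sq_nonneg σ
  constructor
  · -- part (i)
    intro x hx i
    obtain ⟨u, hu⟩ : ∃ u, u = X⁻¹.mulVec x := ⟨_, rfl⟩
    obtain ⟨v, hv⟩ : ∃ v, v = (EYx i * X - EYu i * Y).mulVec u := ⟨_, rfl⟩
    have h := (hb i).dotProduct_mulVec_nonneg (Sum.elim v u)
    simp only [star_trivial, Matrix.neg_mulVec, dotProduct_neg,
      Matrix.fromBlocks_mulVec, sumElim_dotProduct_sumElim,
      Sum.elim_comp_inl, Sum.elim_comp_inr, Matrix.one_mulVec,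
      dotProduct_add] at h
    have e1 : u ⬝ᵥ (EYx i * X - EYu i * Y)ᵀ.mulVec v = v ⬝ᵥ v := by
      rw [Matrix.dotProduct_mulVec, Matrix.vecMul_transpose, ← hv,
        dotProduct_comm]
    have e2 : u ⬝ᵥ X.mulVec u = x ⬝ᵥ X⁻¹.mulVec x := by
      conv_lhs => rw [hu, Matrix.mulVec_mulVec, hXinv, Matrix.one_mulVec]
      rw [hsym]
    have e3 : v ⬝ᵥ (EYx i * X - EYu i * Y).mulVec u = v ⬝ᵥ v := by rw [← hv]
    have key : v ⬝ᵥ v ≤ x ⬝ᵥ X⁻¹.mulVec x := by linarith [h, e1, e2, e3]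
    have hCbar : (EYx i - EYu i * (Y * X⁻¹)) = (EYx i * X - EYu i * Y) * X⁻¹ := by
      rw [Matrix.sub_mul, Matrix.mul_assoc (EYx i), hXinv, Matrix.mul_one,
        Matrix.mul_assoc]
    have hvx : (EYx i - EYu i * (Y * X⁻¹)).mulVec x = v := by
      rw [hCbar, ← Matrix.mulVec_mulVec, ← hu, hv]
    have e4 : x ⬝ᵥ ((EYx i - EYu i * (Y * X⁻¹))ᵀ *
        (EYx i - EYu i * (Y * X⁻¹))).mulVec x = v ⬝ᵥ v := by
      rw [← Matrix.mulVec_mulVec, hvx, Matrix.dotProduct_mulVec,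
        Matrix.vecMul_transpose, hvx]
    rw [Set.mem_setOf_eq] at hx
    calc x ⬝ᵥ ((EYx i - EYu i * (Y * X⁻¹))ᵀ *
        (EYx i - EYu i * (Y * X⁻¹))).mulVec x = v ⬝ᵥ v := e4
      _ ≤ x ⬝ᵥ X⁻¹.mulVec x := key
      _ ≤ σ ^ 2 := hx
  · -- part (ii)
    intro z0 hz
    rw [Set.mem_add] at hz
    obtain ⟨p, hp, q, hq, rfl⟩ := hz
    obtain ⟨x, hx, rfl⟩ := hp
    obtain ⟨w, hw, rfl⟩ := hq
    rw [Set.mem_setOf_eq] at hx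
    obtain ⟨z, hzd⟩ : ∃ z, z = (A - Bu * (Y * X⁻¹)).mulVec x + Bw.mulVec w := ⟨_, rfl⟩
    obtain ⟨a, had⟩ : ∃ a, a = X⁻¹.mulVec z := ⟨_, rfl⟩
    obtain ⟨u, hu⟩ : ∃ u, u = X⁻¹.mulVec x := ⟨_, rfl⟩
    have h := ha.dotProduct_mulVec_nonneg (Sum.elim (Sum.elim a u) w)
    simp only [star_trivial, Matrix.neg_mulVec, dotProduct_neg,
      Matrix.fromBlocks_mulVec, sumElim_dotProduct_sumElim,
      Matrix.fromRows_mulVec, Matrix.fromCols_mulVec_sumElim,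
      Matrix.zero_mulVec, Sum.elim_comp_inl, Sum.elim_comp_inr,
      dotProduct_add, dotProduct_zero, add_zero,
      Matrix.smul_mulVec, dotProduct_smul, smul_eq_mul] at h
    -- key equalities
    have eXa : X.mulVec a = z := by
      rw [had, Matrix.mulVec_mulVec, hXinv, Matrix.one_mulVec]
    have eC1u : (A * X - Bu * Y).mulVec u = (A - Bu * (Y * X⁻¹)).mulVec x := by
      rw [hu, Matrix.mulVec_mulVec]
      congr 1
      rw [Matrix.sub_mul, Matrix.mul_assoc A, hXinv, Matrix.mul_one,
        Matrix.mul_assoc]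
    have e1 : a ⬝ᵥ X.mulVec a = z ⬝ᵥ X⁻¹.mulVec z := by
      rw [eXa, had, hsym]
    have e2 : a ⬝ᵥ (A * X - Bu * Y).mulVec u + a ⬝ᵥ Bw.mulVec w
        = z ⬝ᵥ X⁻¹.mulVec z := by
      rw [eC1u, ← dotProduct_add, ← hzd, had, hsym]
    have e3 : u ⬝ᵥ (A * X - Bu * Y)ᵀ.mulVec a + w ⬝ᵥ Bwᵀ.mulVec a
        = z ⬝ᵥ X⁻¹.mulVec z := by
      rw [Matrix.dotProduct_mulVec u, Matrix.vecMul_transpose,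
        Matrix.dotProduct_mulVec w, Matrix.vecMul_transpose, eC1u,
        ← add_dotProduct, ← hzd, had]
    have e4 : u ⬝ᵥ X.mulVec u = x ⬝ᵥ X⁻¹.mulVec x := by
      conv_lhs => rw [hu, Matrix.mulVec_mulVec, hXinv, Matrix.one_mulVec]
      rw [hsym]
    have e5 : w ⬝ᵥ (Matrix.blockDiagonal' fun i => aσ i • E_W i).mulVec w
        = ∑ i, aσ i * (vecBlock w i ⬝ᵥ (E_W i).mulVec (vecBlock w i)) := by
      rw [blockDiagonal'_dot]
      refine Finset.sum_congr rfl fun i _ => ?_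
      rw [Matrix.smul_mulVec, dotProduct_smul, smul_eq_mul]
    have e6 : ∑ i, aσ i * (vecBlock w i ⬝ᵥ (E_W i).mulVec (vecBlock w i))
        ≤ (∑ i, aσ i) * σ ^ 2 := by
      rw [Finset.sum_mul]
      exact Finset.sum_le_sum fun i _ => mul_le_mul_of_nonneg_left (hw i) (haσ i)
    rw [Set.mem_setOf_eq, ← hzd]
    nlinarith [h, e1, e2, e3, e4, e5, e6, hx, hσ2, haα,
      mul_le_mul_of_nonneg_left hx haα, mul_le_mul_of_nonneg_right hc hσ2]
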